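/- Let f : ℝ → ℝ be locally integrable, μ-almost periodic, nonnegative a.e. Suppose that for every ε > 0 there exist T₀, N₀ > 0 such that (1/T)∫_0^T (f(x) − f_{N₀}(x)) dx < ε for all T ≥ T₀, where f_N = max(−N, min(f, N)) is the truncation. Then the mean value M{f} = lim_{T→+∞}(1/T)∫_0^T f exists, is finite, and equals lim_{N→+∞} M{f_N}. -/

import Mathlib

open MeasureTheory Filter Set intervalIntegral

noncomputable section

/-- A set `A ⊆ ℝ` is relatively dense. -/
def RelDense (A : Set ℝ) : Prop := ∃ l > 0, ∀ x : ℝ, ∃ τ ∈ A, x < τ ∧ τ < x + l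

/-- The set over which the infimum defining the LIF firing map is taken. -/
def FiringSet (σ : ℝ) (f : ℝ → ℝ) (t : ℝ) : Set ℝ :=
  {t' | t < t' ∧ Real.exp (σ * t) ≤ ∫ u in t..t', (f u - σ) * Real.exp (σ * u)}

/-- `y` is the firing-map value at `t`: the smallest `t' > t` with
`e^{σ t} = ∫_t^{t'} (f u - σ) e^{σ u} du`. -/
def FiringEq (σ : ℝ) (f : ℝ → ℝ) (t y : ℝ) : Prop :=
  IsLeast {t' | t < t' ∧ Real.exp (σ * t) = ∫ u in t..t', (f u - σ) * Real.exp (σ * u)} y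

/-- The Stepanov `S¹` seminorm. -/
def SNorm (f : ℝ → ℝ) : ℝ := ⨆ t : ℝ, ∫ u in t..(t + 1), |f u|

/-- Stepanov `S¹`-almost periodicity. -/
def S1AP (f : ℝ → ℝ) : Prop :=
  ∀ ε > 0, RelDense {τ | SNorm (fun u => f (u + τ) - f u) < ε}

/-- `D(η; f, g) = sup_u μ({t ∈ [u,u+1] : |f t - g t| ≥ η})`. -/
def Dfun (η : ℝ) (f g : ℝ → ℝ) : ℝ :=
  ⨆ u : ℝ, (volume {t ∈ Set.Icc u (u + 1) | η ≤ |f t - g t|}).toReal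

/-- Almost periodicity in the Lebesgue measure (μ-almost periodicity). -/
def MuAP (f : ℝ → ℝ) : Prop :=
  ∀ ε > 0, ∀ η > 0, RelDense {τ | Dfun η (fun t => f (t + τ)) f ≤ ε}

/-- Bohr (uniform) almost periodicity. -/
def BohrAP (g : ℝ → ℝ) : Prop :=
  Continuous g ∧ ∀ ε > 0, RelDense {τ | (⨆ t : ℝ, |g (t + τ) - g t|) < ε}

/-- Limit-periodicity: `g` is a uniform limit of continuous periodic functions. -/
def LimitPeriodic (g : ℝ → ℝ) : Prop :=
  ∃ gn : ℕ → ℝ → ℝ, (∀ n, Continuous (gn n) ∧ ∃ p > 0, Function.Periodic (gn n) p) ∧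
    TendstoUniformly gn g atTop

/-- The truncation `f_N = max(−N, min(f, N))`. -/
def trunc (f : ℝ → ℝ) (N : ℝ) : ℝ → ℝ := fun x => max (-N) (min (f x) N)

lemma trunc_lip (N a b : ℝ) : |max (-N) (min a N) - max (-N) (min b N)| ≤ |a - b| := by
  rw [max_comm (-N) (min a N), max_comm (-N) (min b N)]
  refine (abs_max_sub_max_le_abs _ _ _).trans ?_
  calc |min a N - min b N| ≤ max |a - b| |N - N| := abs_min_sub_min_le_max a N b N
  _ = |a - b| := by simp

lemma bdd_intervalIntegrable (g : ℝ → ℝ) (hg : AEStronglyMeasurable g volume) (N : ℝ)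
    (hb : ∀ x, |g x| ≤ N) (a b : ℝ) : IntervalIntegrable g volume a b := by
  rw [intervalIntegrable_iff]
  refine Integrable.mono' (g := fun _ => N) ?_ hg.restrict (ae_of_all _ fun x => ?_)
  · have : IntegrableOn (fun _ => N) (Set.uIoc a b) volume := by
      rw [integrableOn_const_iff]; exact Or.inr measure_Ioc_lt_top
    exact this
  · simpa using hb x

lemma intOn_const (c u v : ℝ) : IntegrableOn (fun _ => c) (Ioc u v) volume := by
  rw [integrableOn_const_iff]; exact Or.inr measure_Ioc_lt_top

lemma unit_bound (g : ℝ → ℝ) (hg : Measurable g) {N η ε : ℝ} (hN : 0 < N) (hη : 0 < η)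
    (hε : 0 ≤ ε) (τ u : ℝ) (hb : ∀ x, |g x| ≤ N)
    (hτ : volume {t ∈ Icc u (u+1) | η ≤ |g (t+τ) - g t|} ≤ ENNReal.ofReal ε) :
    ∫ t in u..(u+1), |g (t+τ) - g t| ≤ η + 2*N*ε := by
  set d : ℝ → ℝ := fun t => |g (t+τ) - g t| with hd
  have hdm : Measurable d := ((hg.comp (measurable_id.add_const τ)).sub hg).abs
  have hdb : ∀ x, |d x| ≤ 2*N := by
    intro x
    rw [abs_abs]
    calc |g (x+τ) - g x| ≤ |g (x+τ)| + |g x| := abs_sub _ _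
    _ ≤ 2*N := by have := hb (x+τ); have := hb x; linarith
  set S : Set ℝ := {t ∈ Icc u (u+1) | η ≤ |g (t+τ) - g t|} with hSdef
  have hSm : MeasurableSet S := by
    have : S = Icc u (u+1) ∩ {t | η ≤ d t} := by
      ext t; constructor <;> exact fun h => ⟨h.1, h.2⟩
    rw [this]
    exact measurableSet_Icc.inter (measurableSet_le measurable_const hdm)
  have hle : u ≤ u + 1 := by linarith
  rw [intervalIntegral.integral_of_le hle]
  have hint : IntegrableOn d (Ioc u (u+1)) volume := by
    exact Integrable.mono' (intOn_const (2*N) u (u+1)) hdm.aestronglyMeasurable.restrict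
      (ae_of_all _ fun x => hdb x)
  have hint2 : IntegrableOn (fun t => η + S.indicator (fun _ => 2*N) t) (Ioc u (u+1)) volume := by
    exact Integrable.add (intOn_const η u (u+1)) ((intOn_const (2*N) u (u+1)).indicator hSm)
  have hmono : ∫ t in Ioc u (u+1), d t ≤ ∫ t in Ioc u (u+1), (η + S.indicator (fun _ => 2*N) t) := by
    refine setIntegral_mono_on hint hint2 measurableSet_Ioc fun t ht => ?_
    by_cases hts : t ∈ S
    · rw [Set.indicator_of_mem hts]
      have := hdb t
      rw [abs_of_nonneg (abs_nonneg _)] at this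
      linarith
    · rw [Set.indicator_of_notMem hts]
      have : ¬ η ≤ d t := by
        intro hc
        exact hts ⟨Ioc_subset_Icc_self ht, hc⟩
      linarith [not_le.1 this]
  have hcalc : ∫ t in Ioc u (u+1), (η + S.indicator (fun _ => 2*N) t) ≤ η + 2*N*ε := by
    rw [integral_add (intOn_const η u (u+1)) ((intOn_const (2*N) u (u+1)).indicator hSm)]
    rw [setIntegral_const, setIntegral_indicator hSm, setIntegral_const]
    simp only [measureReal_def]
    rw [Real.volume_Ioc]
    have h1 : (ENNReal.ofReal (u + 1 - u)).toReal = 1 := by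
      rw [ENNReal.toReal_ofReal (by linarith)]; ring
    rw [h1]
    have h2 : (volume (Ioc u (u+1) ∩ S)).toReal ≤ ε := by
      refine ENNReal.toReal_le_of_le_ofReal hε ?_
      exact le_trans (measure_mono Set.inter_subset_right) hτ
    have : (volume (Ioc u (u+1) ∩ S)).toReal • (2*N) ≤ ε * (2*N) := by
      rw [smul_eq_mul]
      exact mul_le_mul_of_nonneg_right h2 (by linarith)
    simp only [smul_eq_mul] at this ⊢
    nlinarith
  exact le_trans hmono hcalc

lemma claim1 (g : ℝ → ℝ) (hg : Measurable g) {N η ε : ℝ} (hN : 0 < N) (hη : 0 < η)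
    (hε : 0 ≤ ε) (τ : ℝ) (hb : ∀ x, |g x| ≤ N)
    (hτ : ∀ u, volume {t ∈ Icc u (u+1) | η ≤ |g (t+τ) - g t|} ≤ ENNReal.ofReal ε) :
    ∀ a : ℝ, ∀ T : ℝ, 0 ≤ T →
      |∫ t in a..(a+T), (g (t+τ) - g t)| ≤ (T+1)*(η + 2*N*ε) := by
  set d : ℝ → ℝ := fun t => |g (t+τ) - g t| with hd
  have hdm : Measurable d := ((hg.comp (measurable_id.add_const τ)).sub hg).abs
  have hdb : ∀ x, |d x| ≤ 2*N := by
    intro x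
    rw [abs_abs]
    calc |g (x+τ) - g x| ≤ |g (x+τ)| + |g x| := abs_sub _ _
    _ ≤ 2*N := by have := hb (x+τ); have := hb x; linarith
  have hdint : ∀ a b : ℝ, IntervalIntegrable d volume a b :=
    bdd_intervalIntegrable d hdm.aestronglyMeasurable (2*N) hdb
  have hδ : 0 ≤ η + 2*N*ε := by nlinarith
  have hnat : ∀ n : ℕ, ∀ a : ℝ, ∫ t in a..(a+n), d t ≤ n * (η + 2*N*ε) := by
    intro n
    induction n with
    | zero => intro a; simp
    | succ n ih =>
      intro a
      have h1 : ∫ t in a..(a+(n+1):ℝ), d t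
          = (∫ t in a..(a+n), d t) + ∫ t in (a+n)..((a+n)+1), d t := by
        rw [intervalIntegral.integral_add_adjacent_intervals (hdint a (a+n)) (hdint (a+n) ((a+n)+1))]
        norm_num [add_assoc]
      push_cast
      rw [h1]
      have h2 : ∫ t in (a+n)..((a+n)+1), d t ≤ η + 2*N*ε :=
        unit_bound g hg hN hη hε τ (a+n) hb (hτ (a+n))
      have := ih a
      linarith
  intro a T hT
  have h0 : |∫ t in a..(a+T), (g (t+τ) - g t)| ≤ ∫ t in a..(a+T), d t :=
    intervalIntegral.abs_integral_le_integral_abs (by linarith)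
  have h1 : ∫ t in a..(a+T), d t ≤ ∫ t in a..(a+(⌈T⌉₊:ℝ)), d t := by
    refine intervalIntegral.integral_mono_interval le_rfl (by linarith)
      (by have := Nat.le_ceil T; linarith) ?_ (hdint a (a+⌈T⌉₊))
    exact ae_of_all _ fun x => abs_nonneg _
  have h2 : (⌈T⌉₊ : ℝ) * (η + 2*N*ε) ≤ (T+1)*(η + 2*N*ε) := by
    refine mul_le_mul_of_nonneg_right ?_ hδ
    exact le_of_lt (Nat.ceil_lt_add_one hT)
  exact h0.trans (h1.trans ((hnat ⌈T⌉₊ a).trans h2))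

lemma claim2 (g : ℝ → ℝ) (hg : Measurable g) {N η ε l : ℝ} (hN : 0 < N) (hη : 0 < η)
    (hε : 0 ≤ ε) (hl : 0 < l) (hb : ∀ x, |g x| ≤ N)
    (hP : ∀ x : ℝ, ∃ τ, (x < τ ∧ τ < x + l) ∧
      ∀ u, volume {t ∈ Icc u (u+1) | η ≤ |g (t+τ) - g t|} ≤ ENNReal.ofReal ε) :
    ∀ a b T : ℝ, 0 ≤ T →
      |(∫ x in a..(a+T), g x) - ∫ x in b..(b+T), g x| ≤ (T+1)*(η + 2*N*ε) + 2*N*l := by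
  intro a b T hT
  have hgi : ∀ c d : ℝ, IntervalIntegrable g volume c d :=
    bdd_intervalIntegrable g hg.aestronglyMeasurable N hb
  obtain ⟨τ, ⟨hτ1, hτ2⟩, hτ3⟩ := hP (b - a)
  set s := a + τ with hs
  have hbs : b < s := by simp [hs]; linarith
  have hsl : s < b + l := by simp [hs]; linarith
  -- translation step
  have hgiτ : ∀ c d : ℝ, IntervalIntegrable (fun t => g (t+τ)) volume c d :=
    bdd_intervalIntegrable _ (hg.comp (measurable_id.add_const τ)).aestronglyMeasurable N
      (fun x => hb _)
  have hshift : ∫ t in a..(a+T), g (t+τ) = ∫ x in s..(s+T), g x := by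
    rw [intervalIntegral.integral_comp_add_right]
    congr 1
    ring
  have h1 : |(∫ x in s..(s+T), g x) - ∫ x in a..(a+T), g x| ≤ (T+1)*(η + 2*N*ε) := by
    rw [← hshift, ← intervalIntegral.integral_sub (hgiτ a (a+T)) (hgi a (a+T))]
    exact claim1 g hg hN hη hε τ hb hτ3 a T hT
  -- endpoint shift step
  have e1 : (∫ x in b..s, g x) + ∫ x in s..(s+T), g x = ∫ x in b..(s+T), g x :=
    intervalIntegral.integral_add_adjacent_intervals (hgi b s) (hgi s (s+T))
  have e2 : (∫ x in b..(b+T), g x) + ∫ x in (b+T)..(s+T), g x = ∫ x in b..(s+T), g x :=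
    intervalIntegral.integral_add_adjacent_intervals (hgi b (b+T)) (hgi (b+T) (s+T))
  have hb1 : |∫ x in b..s, g x| ≤ N * l := by
    have := intervalIntegral.norm_integral_le_of_norm_le_const
      (C := N) (f := g) (a := b) (b := s) (fun x _ => hb x)
    rw [Real.norm_eq_abs] at this
    refine this.trans ?_
    rw [abs_of_nonneg (by linarith)]
    nlinarith
  have hb2 : |∫ x in (b+T)..(s+T), g x| ≤ N * l := by
    have := intervalIntegral.norm_integral_le_of_norm_le_const
      (C := N) (f := g) (a := b+T) (b := s+T) (fun x _ => hb x)
    rw [Real.norm_eq_abs] at this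
    refine this.trans ?_
    have : |s + T - (b + T)| = s - b := by rw [abs_of_nonneg (by linarith)]; ring
    rw [this]
    nlinarith
  have h2 : |(∫ x in s..(s+T), g x) - ∫ x in b..(b+T), g x| ≤ 2*N*l := by
    have key : (∫ x in s..(s+T), g x) - ∫ x in b..(b+T), g x
        = (∫ x in (b+T)..(s+T), g x) - ∫ x in b..s, g x := by linarith
    rw [key]
    calc |(∫ x in (b+T)..(s+T), g x) - ∫ x in b..s, g x|
        ≤ |∫ x in (b+T)..(s+T), g x| + |∫ x in b..s, g x| := abs_sub _ _
    _ ≤ 2*N*l := by linarith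
  calc |(∫ x in a..(a+T), g x) - ∫ x in b..(b+T), g x|
      ≤ |(∫ x in a..(a+T), g x) - ∫ x in s..(s+T), g x|
        + |(∫ x in s..(s+T), g x) - ∫ x in b..(b+T), g x| := abs_sub_le _ _ _
  _ ≤ (T+1)*(η + 2*N*ε) + 2*N*l := by
      rw [abs_sub_comm]
      linarith

lemma claim3 (g : ℝ → ℝ) (hg : Measurable g) {N η ε l : ℝ} (hN : 0 < N) (hη : 0 < η)
    (hε : 0 ≤ ε) (hl : 0 < l) (hb : ∀ x, |g x| ≤ N)
    (hP : ∀ x : ℝ, ∃ τ, (x < τ ∧ τ < x + l) ∧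
      ∀ u, volume {t ∈ Icc u (u+1) | η ≤ |g (t+τ) - g t|} ≤ ENNReal.ofReal ε) :
    ∀ T : ℝ, 0 ≤ T → ∀ n : ℕ,
      |(∫ x in (0:ℝ)..(n*T), g x) - n * ∫ x in (0:ℝ)..T, g x|
        ≤ n * ((T+1)*(η + 2*N*ε) + 2*N*l) := by
  intro T hT n
  have hgi : ∀ c d : ℝ, IntervalIntegrable g volume c d :=
    bdd_intervalIntegrable g hg.aestronglyMeasurable N hb
  induction n with
  | zero => simp
  | succ n ih =>
    have hadd : ∫ x in (0:ℝ)..((n+1:ℕ)*T), g x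
        = (∫ x in (0:ℝ)..(n*T), g x) + ∫ x in (n*T)..((n*T)+T), g x := by
      rw [intervalIntegral.integral_add_adjacent_intervals (hgi 0 (n*T)) (hgi (n*T) (n*T+T))]
      congr 1
      push_cast
      ring
    have hcomp : |(∫ x in (n*T)..((n*T)+T), g x) - ∫ x in (0:ℝ)..T, g x|
        ≤ (T+1)*(η + 2*N*ε) + 2*N*l := by
      have := claim2 g hg hN hη hε hl hb hP (n*T) 0 T hT
      simpa using this
    have := ih
    rw [hadd]
    push_cast
    push_cast at this
    have habs : |(∫ x in (0:ℝ)..(n*T), g x) + (∫ x in (n*T)..((n*T)+T), g x)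
        - (n+1) * ∫ x in (0:ℝ)..T, g x|
        ≤ |(∫ x in (0:ℝ)..(n*T), g x) - n * ∫ x in (0:ℝ)..T, g x|
          + |(∫ x in (n*T)..((n*T)+T), g x) - ∫ x in (0:ℝ)..T, g x| := by
      have := abs_add_le ((∫ x in (0:ℝ)..(n*T), g x) - n * ∫ x in (0:ℝ)..T, g x)
        ((∫ x in (n*T)..((n*T)+T), g x) - ∫ x in (0:ℝ)..T, g x)
      calc |(∫ x in (0:ℝ)..(n*T), g x) + (∫ x in (n*T)..((n*T)+T), g x)
          - (n+1) * ∫ x in (0:ℝ)..T, g x|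
          = |((∫ x in (0:ℝ)..(n*T), g x) - n * ∫ x in (0:ℝ)..T, g x)
            + ((∫ x in (n*T)..((n*T)+T), g x) - ∫ x in (0:ℝ)..T, g x)| := by ring_nf
      _ ≤ _ := abs_add_le _ _
    linarith

set_option maxHeartbeats 2000000 in
lemma mainCauchy (g : ℝ → ℝ) (hg : Measurable g) {N : ℝ} (hN : 0 < N) (hb : ∀ x, |g x| ≤ N)
    (hap : ∀ ε > (0:ℝ), ∀ η > (0:ℝ), ∃ l > (0:ℝ), ∀ x : ℝ, ∃ τ, (x < τ ∧ τ < x + l) ∧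
      ∀ u, volume {t ∈ Icc u (u+1) | η ≤ |g (t+τ) - g t|} ≤ ENNReal.ofReal ε) :
    ∀ ε' > (0:ℝ), ∃ T₂ ≥ (1:ℝ), ∀ S T : ℝ, T₂ ≤ S → T₂ ≤ T →
      |((1/S) * ∫ x in (0:ℝ)..S, g x) - (1/T) * ∫ x in (0:ℝ)..T, g x| ≤ ε' := by
  intro ε' hε'
  obtain ⟨I, hI⟩ : ∃ I : ℝ → ℝ, ∀ T, I T = ∫ x in (0:ℝ)..T, g x := ⟨_, fun _ => rfl⟩
  obtain ⟨A, hA⟩ : ∃ A : ℝ → ℝ, ∀ T, A T = (1/T) * I T := ⟨_, fun _ => rfl⟩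
  have hgi : ∀ c d : ℝ, IntervalIntegrable g volume c d :=
    bdd_intervalIntegrable g hg.aestronglyMeasurable N hb
  have hIbnd : ∀ T : ℝ, 0 ≤ T → |I T| ≤ N * T := by
    intro T hT
    rw [hI]
    have := intervalIntegral.norm_integral_le_of_norm_le_const
      (C := N) (f := g) (a := (0:ℝ)) (b := T) (fun x _ => hb x)
    rw [Real.norm_eq_abs] at this
    refine this.trans ?_
    rw [abs_of_nonneg (by linarith)]
    simp
  set η : ℝ := ε'/100 with hη
  set εm : ℝ := ε'/(400*N) with hεm
  have hηpos : 0 < η := by positivity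
  have hεmpos : 0 < εm := by positivity
  obtain ⟨l, hl, hP⟩ := hap εm hεmpos η hηpos
  have hδ : η + 2*N*εm ≤ ε'/50 := by
    have h2 : 2*N*εm = ε'/200 := by rw [hεm]; field_simp; ring
    rw [hη, h2]
    linarith
  have hδ0 : 0 ≤ η + 2*N*εm := by positivity
  set T₂ : ℝ := max 1 (100*N*l/ε') with hT₂
  refine ⟨T₂, le_max_left _ _, ?_⟩
  have hT₂pos : 0 < T₂ := lt_of_lt_of_le one_pos (le_max_left _ _)
  -- key bound: multiples
  have keybound : ∀ T : ℝ, T₂ ≤ T → ∀ n : ℕ, 1 ≤ n → |A (n*T) - A T| ≤ ε'/10 := by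
    intro T hT n hn
    have hT1 : (1:ℝ) ≤ T := le_trans (le_max_left _ _) hT
    have hTpos : 0 < T := by linarith
    have hnpos : (0:ℝ) < n := by exact_mod_cast Nat.pos_of_ne_zero (by omega)
    have h3 := claim3 g hg hN hηpos hεmpos.le hl hb hP T hTpos.le n
    rw [← hI ((n:ℝ)*T), ← hI T] at h3
    have halg : A (n*T) - A T = (1/(n*T)) * (I (n*T) - n * I T) := by
      rw [hA, hA]
      field_simp
    rw [halg, abs_mul]
    have h1 : |1/((n:ℝ)*T)| = 1/((n:ℝ)*T) := abs_of_pos (by positivity)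
    rw [h1]
    have hmul : (1/((n:ℝ)*T)) * |I (n*T) - n * I T|
        ≤ (1/((n:ℝ)*T)) * ((n:ℝ) * ((T+1)*(η + 2*N*εm) + 2*N*l)) :=
      mul_le_mul_of_nonneg_left h3 (by positivity)
    refine hmul.trans ?_
    have heq : (1/((n:ℝ)*T)) * ((n:ℝ) * ((T+1)*(η + 2*N*εm) + 2*N*l))
        = ((T+1)/T)*(η + 2*N*εm) + 2*N*l/T := by
      field_simp
    rw [heq]
    have hb1 : ((T+1)/T)*(η + 2*N*εm) ≤ 2*(ε'/50) := by
      have : (T+1)/T ≤ 2 := by rw [div_le_iff₀ hTpos]; linarith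
      nlinarith
    have hb2 : 2*N*l/T ≤ ε'/50 := by
      have hTge : 100*N*l/ε' ≤ T := le_trans (le_max_right _ _) hT
      rw [div_le_iff₀ hTpos]
      rw [div_le_iff₀ hε'] at hTge
      nlinarith
    linarith
  -- floor bound
  have floorbound : ∀ T R : ℝ, T₂ ≤ T → T ≤ R → |A R - A T| ≤ ε'/10 + 2*N*T/R := by
    intro T R hT hTR
    have hT1 : (1:ℝ) ≤ T := le_trans (le_max_left _ _) hT
    have hTpos : 0 < T := by linarith
    have hRpos : 0 < R := by linarith
    obtain ⟨n, hn⟩ : ∃ n : ℕ, n = ⌊R/T⌋₊ := ⟨_, rfl⟩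
    have hn1 : 1 ≤ n := by
      rw [hn]
      refine Nat.le_floor ?_
      rw [Nat.cast_one, le_div_iff₀ hTpos]
      linarith
    have hnR : (n:ℝ)*T ≤ R := by
      have := Nat.floor_le (a := R/T) (by positivity)
      rw [← hn] at this
      calc (n:ℝ)*T ≤ (R/T)*T := by nlinarith
      _ = R := by field_simp
    have hRn : R < ((n:ℝ)+1)*T := by
      have := Nat.lt_floor_add_one (R/T)
      rw [← hn] at this
      calc R = (R/T)*T := by field_simp
      _ < ((n:ℝ)+1)*T := by nlinarith
    have hnpos : (0:ℝ) < n := by exact_mod_cast Nat.pos_of_ne_zero (by omega)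
    have htail : |∫ x in ((n:ℝ)*T)..R, g x| ≤ N*T := by
      have := intervalIntegral.norm_integral_le_of_norm_le_const
        (C := N) (f := g) (a := (n:ℝ)*T) (b := R) (fun x _ => hb x)
      rw [Real.norm_eq_abs] at this
      refine this.trans ?_
      rw [abs_of_nonneg (by linarith)]
      have h1 : R - (n:ℝ)*T ≤ T := by linarith
      have := mul_le_mul_of_nonneg_left h1 hN.le
      linarith
    have hIR : I R = I ((n:ℝ)*T) + ∫ x in ((n:ℝ)*T)..R, g x := by
      rw [hI R, hI ((n:ℝ)*T)]
      exact (intervalIntegral.integral_add_adjacent_intervals (hgi 0 ((n:ℝ)*T))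
        (hgi ((n:ℝ)*T) R)).symm
    have hInT : |I ((n:ℝ)*T)| ≤ N*((n:ℝ)*T) := hIbnd _ (by positivity)
    have halg : A R - A ((n:ℝ)*T)
        = I ((n:ℝ)*T) * (1/R - 1/((n:ℝ)*T)) + (1/R) * ∫ x in ((n:ℝ)*T)..R, g x := by
      rw [hA, hA, hIR]
      field_simp
      ring
    have hinv : 1/R ≤ 1/((n:ℝ)*T) := one_div_le_one_div_of_le (by positivity) hnR
    have hd1 : |I ((n:ℝ)*T) * (1/R - 1/((n:ℝ)*T))| ≤ N*T/R := by
      rw [abs_mul]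
      have habs : |1/R - 1/((n:ℝ)*T)| = 1/((n:ℝ)*T) - 1/R := by
        rw [abs_sub_comm, abs_of_nonneg (by linarith)]
      rw [habs]
      have step : |I ((n:ℝ)*T)| * (1/((n:ℝ)*T) - 1/R) ≤ (N*((n:ℝ)*T)) * (1/((n:ℝ)*T) - 1/R) :=
        mul_le_mul_of_nonneg_right hInT (by linarith)
      refine step.trans ?_
      have expand : (N*((n:ℝ)*T)) * (1/((n:ℝ)*T) - 1/R) = N - N*(n:ℝ)*T/R := by
        field_simp
      rw [expand, sub_le_iff_le_add, ← add_div, le_div_iff₀ hRpos]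
      nlinarith
    have hd2 : |(1/R) * ∫ x in ((n:ℝ)*T)..R, g x| ≤ N*T/R := by
      rw [abs_mul, abs_of_pos (by positivity : (0:ℝ) < 1/R)]
      calc (1/R) * |∫ x in ((n:ℝ)*T)..R, g x| ≤ (1/R)*(N*T) :=
            mul_le_mul_of_nonneg_left htail (by positivity)
      _ = N*T/R := by ring
    have hAR : |A R - A ((n:ℝ)*T)| ≤ 2*N*T/R := by
      rw [halg]
      calc |I ((n:ℝ)*T) * (1/R - 1/((n:ℝ)*T)) + (1/R) * ∫ x in ((n:ℝ)*T)..R, g x|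
          ≤ |I ((n:ℝ)*T) * (1/R - 1/((n:ℝ)*T))| + |(1/R) * ∫ x in ((n:ℝ)*T)..R, g x| :=
            abs_add_le _ _
      _ ≤ N*T/R + N*T/R := add_le_add hd1 hd2
      _ = 2*N*T/R := by ring
    have hAk := keybound T hT n hn1
    calc |A R - A T| ≤ |A R - A ((n:ℝ)*T)| + |A ((n:ℝ)*T) - A T| := abs_sub_le _ _ _
    _ ≤ ε'/10 + 2*N*T/R := by linarith
  -- conclude
  intro S T hS hT
  have hS1 : (1:ℝ) ≤ S := le_trans (le_max_left _ _) hS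
  have hT1 : (1:ℝ) ≤ T := le_trans (le_max_left _ _) hT
  have hSpos : 0 < S := by linarith
  have hTpos : 0 < T := by linarith
  obtain ⟨R, hR⟩ : ∃ R : ℝ, R = 20*N*(S+T)/ε' + S + T := ⟨_, rfl⟩
  have haux : 0 ≤ 20*N*(S+T)/ε' := by positivity
  have hRpos : 0 < R := by rw [hR]; linarith
  have hSR : S ≤ R := by rw [hR]; linarith
  have hTR : T ≤ R := by rw [hR]; linarith
  have h1 := floorbound S R hS hSR
  have h2 := floorbound T R hT hTR
  have key : ε'*R = 20*N*(S+T) + ε'*(S+T) := by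
    rw [hR]
    field_simp
    ring
  have p1 : 0 ≤ N*T := by positivity
  have p2 : 0 ≤ N*S := by positivity
  have p3 : 0 ≤ ε'*S := by positivity
  have p4 : 0 ≤ ε'*T := by positivity
  have hb1 : 2*N*S/R ≤ ε'/10 := by
    rw [div_le_iff₀ hRpos]
    nlinarith [key, p1, p2, p3, p4]
  have hb2 : 2*N*T/R ≤ ε'/10 := by
    rw [div_le_iff₀ hRpos]
    nlinarith [key, p1, p2, p3, p4]
  have final : |A S - A T| ≤ ε' := by
    calc |A S - A T| ≤ |A S - A R| + |A R - A T| := abs_sub_le _ _ _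
    _ ≤ (ε'/10 + 2*N*S/R) + (ε'/10 + 2*N*T/R) := by
        rw [abs_sub_comm (A S) (A R)]
        linarith
    _ ≤ ε' := by linarith
  rw [hA S, hA T, hI S, hI T] at final
  exact final

lemma trunc_abs_le (N a : ℝ) : |max (-N) (min a N)| ≤ |N| := by
  rcases le_total 0 N with h | h
  · rw [abs_of_nonneg h, abs_le]
    constructor
    · exact le_max_left _ _
    · exact max_le (by linarith) (le_trans (min_le_right _ _) le_rfl)
  · have h1 : min a N ≤ -N := le_trans (min_le_right _ _) (by linarith)
    have h2 : max (-N) (min a N) = -N := max_eq_left h1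
    rw [h2, abs_of_nonneg (by linarith), abs_of_nonpos h]

/-- A set `A ⊆ ℝ` is relatively dense. -/
def RelDense' (A : Set ℝ) : Prop := ∃ l > 0, ∀ x : ℝ, ∃ τ ∈ A, x < τ ∧ τ < x + l

lemma transfer (f f' : ℝ → ℝ) (hf' : Measurable f') (hff' : f' =ᵐ[volume] f) (N : ℝ)
    (hap : ∀ ε > (0:ℝ), ∀ η > (0:ℝ), RelDense'
      {τ | (⨆ u : ℝ, (volume {t ∈ Icc u (u + 1) | η ≤ |f (t + τ) - f t|}).toReal) ≤ ε}) :
    ∀ ε > (0:ℝ), ∀ η > (0:ℝ), ∃ l > (0:ℝ), ∀ x : ℝ, ∃ τ, (x < τ ∧ τ < x + l) ∧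
      ∀ u, volume {t ∈ Icc u (u+1) |
        η ≤ |max (-N) (min (f' (t+τ)) N) - max (-N) (min (f' t) N)|} ≤ ENNReal.ofReal ε := by
  intro ε hε η hη
  obtain ⟨l, hl, hx⟩ := hap ε hε η hη
  refine ⟨l, hl, fun x => ?_⟩
  obtain ⟨τ, hτmem, hτwin⟩ := hx x
  refine ⟨τ, hτwin, fun u => ?_⟩
  set B : ℝ → Set ℝ := fun u => {t ∈ Icc u (u + 1) | η ≤ |f (t + τ) - f t|} with hB
  have hBfin : ∀ v, volume (B v) ≤ ENNReal.ofReal 1 := by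
    intro v
    calc volume (B v) ≤ volume (Icc v (v+1)) := measure_mono (sep_subset _ _)
    _ = ENNReal.ofReal 1 := by rw [Real.volume_Icc]; norm_num
  have hbdd : BddAbove (Set.range fun v => (volume (B v)).toReal) := by
    refine ⟨1, fun y hy => ?_⟩
    obtain ⟨v, rfl⟩ := hy
    exact ENNReal.toReal_le_of_le_ofReal zero_le_one (hBfin v)
  have htu : (volume (B u)).toReal ≤ ε := le_trans (le_ciSup hbdd u) hτmem
  have hBle : volume (B u) ≤ ENNReal.ofReal ε := by
    refine (ENNReal.le_ofReal_iff_toReal_le ?_ hε.le).2 htu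
    exact ne_top_of_le_ne_top (by simp) (hBfin u)
  -- null sets
  set E : Set ℝ := {x | f' x ≠ f x} with hE
  have hE0 : volume E = 0 := hff'
  have hE'0 : volume ((fun t => t + τ) ⁻¹' E) = 0 := by
    rw [measure_preimage_add_right]
    exact hE0
  have hsub : {t ∈ Icc u (u+1) |
      η ≤ |max (-N) (min (f' (t+τ)) N) - max (-N) (min (f' t) N)|}
      ⊆ B u ∪ (E ∪ (fun t => t + τ) ⁻¹' E) := by
    intro t ht
    by_cases htE : t ∈ E ∪ (fun t => t + τ) ⁻¹' E
    · exact Or.inr htE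
    · left
      rw [Set.mem_union] at htE
      push_neg at htE
      have h1 : f' t = f t := by
        have := htE.1
        simpa [hE] using this
      have h2 : f' (t + τ) = f (t + τ) := by
        have := htE.2
        simpa [hE, Set.mem_preimage] using this
      refine ⟨ht.1, ?_⟩
      calc η ≤ |max (-N) (min (f' (t+τ)) N) - max (-N) (min (f' t) N)| := ht.2
      _ ≤ |f' (t+τ) - f' t| := trunc_lip N _ _
      _ = |f (t+τ) - f t| := by rw [h1, h2]
  calc volume {t ∈ Icc u (u+1) |
      η ≤ |max (-N) (min (f' (t+τ)) N) - max (-N) (min (f' t) N)|}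
      ≤ volume (B u ∪ (E ∪ (fun t => t + τ) ⁻¹' E)) := measure_mono hsub
  _ ≤ volume (B u) + volume (E ∪ (fun t => t + τ) ⁻¹' E) := measure_union_le _ _
  _ = volume (B u) := by rw [measure_union_null_iff.2 ⟨hE0, hE'0⟩, add_zero]
  _ ≤ ENNReal.ofReal ε := hBle

lemma locInt_intervalIntegrable (f : ℝ → ℝ) (hf : LocallyIntegrable f volume) (a b : ℝ) :
    IntervalIntegrable f volume a b := by
  rw [intervalIntegrable_iff]
  exact (hf.integrableOn_isCompact isCompact_uIcc).mono_set Set.uIoc_subset_uIcc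

set_option maxHeartbeats 1000000 in
theorem stmt12 (f : ℝ → ℝ) (hf : LocallyIntegrable f volume) (hap : MuAP f)
    (hpos : ∀ᵐ t, 0 ≤ f t)
    (hcond : ∀ ε > 0, ∃ T₀ > 0, ∃ N₀ > 0, ∀ T ≥ T₀,
      (1 / T) * ∫ x in (0:ℝ)..T, (f x - trunc f N₀ x) < ε) :
    ∃ m : ℝ, Tendsto (fun T => (1 / T) * ∫ x in (0:ℝ)..T, f x) atTop (nhds m) ∧
      ∀ MN : ℝ → ℝ,
        (∀ N, Tendsto (fun T => (1 / T) * ∫ x in (0:ℝ)..T, trunc f N x)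
          atTop (nhds (MN N))) →
        Tendsto MN atTop (nhds m) := by
  have hfm : AEStronglyMeasurable f volume := hf.aestronglyMeasurable
  obtain ⟨f', hf'meas, hff'⟩ : ∃ f' : ℝ → ℝ, Measurable f' ∧ f' =ᵐ[volume] f := by
    obtain ⟨f', h1, h2⟩ := hfm
    exact ⟨f', h1.measurable, h2.symm⟩
  have hapI : ∀ ε > (0:ℝ), ∀ η > (0:ℝ), RelDense'
      {τ | (⨆ u : ℝ, (volume {t ∈ Icc u (u + 1) | η ≤ |f (t + τ) - f t|}).toReal) ≤ ε} := hap
  have hfint : ∀ a b : ℝ, IntervalIntegrable f volume a b := locInt_intervalIntegrable f hf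
  have htm : ∀ N : ℝ, AEStronglyMeasurable (trunc f N) volume := by
    intro N
    have h1 : Measurable fun x => max (-N) (min (f' x) N) :=
      measurable_const.max (hf'meas.min measurable_const)
    refine h1.aestronglyMeasurable.congr ?_
    filter_upwards [hff'] with x hx
    show max (-N) (min (f' x) N) = trunc f N x
    rw [hx]
    rfl
  have htint : ∀ N a b : ℝ, IntervalIntegrable (trunc f N) volume a b := fun N a b =>
    bdd_intervalIntegrable _ (htm N) |N| (fun x => trunc_abs_le N (f x)) a b
  have htle : ∀ N : ℝ, 0 < N → ∀ᵐ x, trunc f N x ≤ f x := by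
    intro N hN
    filter_upwards [hpos] with x hx
    show max (-N) (min (f x) N) ≤ f x
    exact max_le (by linarith) (min_le_left _ _)
  have hmono : ∀ N M : ℝ, 0 < N → N ≤ M → ∀ᵐ x, trunc f N x ≤ trunc f M x := by
    intro N M hN hNM
    filter_upwards [hpos] with x hx
    show max (-N) (min (f x) N) ≤ max (-M) (min (f x) M)
    have e1 : max (-N) (min (f x) N) = min (f x) N :=
      max_eq_right (le_trans (by linarith) (le_min hx (by linarith)))
    have e2 : max (-M) (min (f x) M) = min (f x) M :=
      max_eq_right (le_trans (by linarith : -M ≤ 0) (le_min hx (by linarith)))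
    rw [e1, e2]
    exact min_le_min le_rfl hNM
  obtain ⟨u, hu⟩ : ∃ u : ℝ → ℝ, ∀ T, u T = (1/T) * ∫ x in (0:ℝ)..T, f x := ⟨_, fun _ => rfl⟩
  have cauchy : ∀ ε > (0:ℝ), ∃ T₁ ≥ (1:ℝ), ∀ S T : ℝ, T₁ ≤ S → T₁ ≤ T → |u S - u T| ≤ ε := by
    intro ε hε
    obtain ⟨T₀, hT₀, N₀, hN₀, hc⟩ := hcond (ε/4) (by linarith)
    have hgmeas : Measurable fun x => max (-N₀) (min (f' x) N₀) :=
      measurable_const.max (hf'meas.min measurable_const)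
    have hgbd : ∀ x, |max (-N₀) (min (f' x) N₀)| ≤ N₀ := fun x => by
      have := trunc_abs_le N₀ (f' x)
      rwa [abs_of_pos hN₀] at this
    have hgap := transfer f f' hf'meas hff' N₀ hapI
    obtain ⟨T₂, hT₂1, hT₂⟩ := mainCauchy _ hgmeas hN₀ hgbd hgap (ε/4) (by linarith)
    refine ⟨max T₀ T₂, le_trans hT₂1 (le_max_right _ _), fun S T hS hT => ?_⟩
    have hgeq : ∀ T : ℝ, (∫ x in (0:ℝ)..T, max (-N₀) (min (f' x) N₀))
        = ∫ x in (0:ℝ)..T, trunc f N₀ x := by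
      intro T
      refine intervalIntegral.integral_congr_ae ?_
      filter_upwards [hff'] with x hx _
      show max (-N₀) (min (f' x) N₀) = trunc f N₀ x
      rw [hx]
      rfl
    have key : ∀ T : ℝ, max T₀ T₂ ≤ T →
        u T - (1/T) * ∫ x in (0:ℝ)..T, max (-N₀) (min (f' x) N₀) ∈ Set.Ico (0:ℝ) (ε/4) := by
      intro T hT
      have hT1 : (1:ℝ) ≤ T := le_trans (le_trans hT₂1 (le_max_right T₀ T₂)) hT
      have hTT₀ : T₀ ≤ T := le_trans (le_max_left _ _) hT
      have heq : u T - (1/T) * ∫ x in (0:ℝ)..T, max (-N₀) (min (f' x) N₀)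
          = (1/T) * ∫ x in (0:ℝ)..T, (f x - trunc f N₀ x) := by
        rw [hu, hgeq, ← mul_sub,
          ← intervalIntegral.integral_sub (hfint 0 T) (htint N₀ 0 T)]
      rw [heq]
      constructor
      · refine mul_nonneg (by positivity) ?_
        refine intervalIntegral.integral_nonneg_of_ae (by linarith) ?_
        filter_upwards [htle N₀ hN₀] with x hx
        simp only [Pi.zero_apply]
        linarith
      · exact hc T hTT₀
    have k1 := key S hS
    have k2 := key T hT
    have k3 := hT₂ S T (le_trans (le_max_right _ _) hS) (le_trans (le_max_right _ _) hT)
    rw [Set.mem_Ico] at k1 k2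
    have habs : |u S - u T| ≤
        |((1/S) * ∫ x in (0:ℝ)..S, max (-N₀) (min (f' x) N₀))
          - (1/T) * ∫ x in (0:ℝ)..T, max (-N₀) (min (f' x) N₀)|
        + |u S - (1/S) * ∫ x in (0:ℝ)..S, max (-N₀) (min (f' x) N₀)|
        + |u T - (1/T) * ∫ x in (0:ℝ)..T, max (-N₀) (min (f' x) N₀)| := by
      set a1 := u S
      set a2 := u T
      set b1 := (1/S) * ∫ x in (0:ℝ)..S, max (-N₀) (min (f' x) N₀)
      set b2 := (1/T) * ∫ x in (0:ℝ)..T, max (-N₀) (min (f' x) N₀)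
      calc |a1 - a2| = |(b1 - b2) + ((a1 - b1) - (a2 - b2))| := by ring_nf
      _ ≤ |b1 - b2| + |(a1 - b1) - (a2 - b2)| := abs_add_le _ _
      _ ≤ |b1 - b2| + (|a1 - b1| + |a2 - b2|) := by
          have := abs_sub (a1 - b1) (a2 - b2)
          linarith
      _ = _ := by ring
    have e1 : |u S - (1/S) * ∫ x in (0:ℝ)..S, max (-N₀) (min (f' x) N₀)| < ε/4 := by
      rw [abs_of_nonneg k1.1]; exact k1.2
    have e2 : |u T - (1/T) * ∫ x in (0:ℝ)..T, max (-N₀) (min (f' x) N₀)| < ε/4 := by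
      rw [abs_of_nonneg k2.1]; exact k2.2
    linarith
  have hcs : CauchySeq (fun n : ℕ => u n) := by
    rw [Metric.cauchySeq_iff']
    intro ε hε
    obtain ⟨T₁, hT₁1, hT₁⟩ := cauchy (ε/2) (by linarith)
    refine ⟨⌈T₁⌉₊, fun n hn => ?_⟩
    rw [Real.dist_eq]
    have h1 : T₁ ≤ (⌈T₁⌉₊:ℝ) := Nat.le_ceil T₁
    have h2 : T₁ ≤ (n:ℝ) := le_trans h1 (by exact_mod_cast hn)
    have := hT₁ n ⌈T₁⌉₊ h2 h1
    linarith
  obtain ⟨m, hm⟩ := cauchySeq_tendsto_of_complete hcs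
  have hum : Tendsto u atTop (nhds m) := by
    rw [Metric.tendsto_atTop]
    intro ε hε
    obtain ⟨T₁, hT₁1, hT₁⟩ := cauchy (ε/3) (by linarith)
    rw [Metric.tendsto_atTop] at hm
    obtain ⟨K, hK⟩ := hm (ε/3) (by linarith)
    refine ⟨T₁, fun T hT => ?_⟩
    set n : ℕ := max K ⌈T₁⌉₊ with hn
    have hnK : K ≤ n := le_max_left _ _
    have hnT : T₁ ≤ (n:ℝ) := by
      refine (Nat.le_ceil T₁).trans ?_
      exact_mod_cast le_max_right K ⌈T₁⌉₊
    rw [Real.dist_eq]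
    have h1 := hT₁ T n hT hnT
    have h2 := hK n hnK
    rw [Real.dist_eq] at h2
    have h3 : |u T - m| ≤ |u T - u n| + |u n - m| := abs_sub_le _ _ _
    have h2' : |u n - m| < ε/3 := h2
    linarith [abs_sub_le (u T) (u n) m]
  refine ⟨m, ?_, ?_⟩
  · have heq : (fun T => (1 / T) * ∫ x in (0:ℝ)..T, f x) = u := funext fun T => (hu T).symm
    rw [heq]
    exact hum
  · intro MN hMN
    rw [Metric.tendsto_atTop]
    intro ε hε
    obtain ⟨T₀, hT₀, N₀, hN₀, hc⟩ := hcond (ε/2) (by linarith)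
    refine ⟨N₀, fun N hN => ?_⟩
    rw [Real.dist_eq]
    have hNpos : 0 < N := lt_of_lt_of_le hN₀ hN
    have hev1 : ∀ᶠ T in atTop, (1/T) * (∫ x in (0:ℝ)..T, trunc f N x)
        ≤ u T := by
      filter_upwards [Filter.eventually_ge_atTop (1:ℝ)] with T hT
      rw [hu]
      refine mul_le_mul_of_nonneg_left ?_ (by positivity)
      exact intervalIntegral.integral_mono_ae (by linarith) (htint N 0 T) (hfint 0 T)
        (htle N hNpos)
    have hle1 : MN N ≤ m := le_of_tendsto_of_tendsto (hMN N) hum hev1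
    have hev2 : ∀ᶠ T in atTop, u T - ε/2 ≤ (1/T) * ∫ x in (0:ℝ)..T, trunc f N x := by
      filter_upwards [Filter.eventually_ge_atTop (max T₀ 1)] with T hT
      have hT1 : (1:ℝ) ≤ T := le_trans (le_max_right _ _) hT
      have hTT₀ : T₀ ≤ T := le_trans (le_max_left _ _) hT
      have hsub : u T - (1/T) * ∫ x in (0:ℝ)..T, trunc f N₀ x < ε/2 := by
        rw [hu, ← mul_sub, ← intervalIntegral.integral_sub (hfint 0 T) (htint N₀ 0 T)]
        exact hc T hTT₀
      have hmon : (1/T) * ∫ x in (0:ℝ)..T, trunc f N₀ x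
          ≤ (1/T) * ∫ x in (0:ℝ)..T, trunc f N x :=
        mul_le_mul_of_nonneg_left
          (intervalIntegral.integral_mono_ae (by linarith) (htint N₀ 0 T) (htint N 0 T)
            (hmono N₀ N hN₀ hN)) (by positivity)
      linarith
    have hle2 : m - ε/2 ≤ MN N := by
      have ht : Tendsto (fun T => u T - ε/2) atTop (nhds (m - ε/2)) := hum.sub_const (ε/2)
      exact le_of_tendsto_of_tendsto ht (hMN N) hev2
    have : |MN N - m| ≤ ε/2 := abs_le.2 ⟨by linarith, by linarith⟩
    linarith
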